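/- arXiv:1102.3950 — 2 statements merged into one kernel-verified Lean document; each statement's English description precedes it below -/
import Mathlib

section
/- Let U, V, W be finite-dimensional complex inner product spaces, let D : U → V be a linear map, and let ρ : V × U* → W be a bilinear map, where U* carries the dual norm. Then ‖Tr_ρ D‖_W ≤ √(rank D) · ‖ρ‖ · ‖D‖, where Tr_ρ D = Σ_i ρ(D u_i, u^i) for an orthonormal basis {u_i} of U with dual basis {u^i}, ‖ρ‖ = sup{ ‖ρ(v, α)‖_W : v ∈ V, α ∈ U*, ‖v‖ = 1, ‖α‖ = 1 }, and ‖D‖ = (Σ_i ‖D u_i‖²_V)^{1/2} is the Hilbert–Schmidt norm of D. -/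
open scoped InnerProductSpace

private theorem sum_sqrt_le_sqrt_card_mul_sqrt_sum {n : ℕ} (s : Fin n → ℝ) (hs : ∀ j, 0 ≤ s j) :
    ∑ j, Real.sqrt (s j) ≤ Real.sqrt n * Real.sqrt (∑ j, s j) := by
  have h := sq_sum_le_card_mul_sum_sq
    (s := (Finset.univ : Finset (Fin n))) (f := fun j => Real.sqrt (s j))
  simp_rw [Real.sq_sqrt (hs _), Finset.card_univ, Fintype.card_fin] at h
  have h3 := Real.sqrt_le_sqrt h
  rw [Real.sqrt_sq (Finset.sum_nonneg fun j _ => Real.sqrt_nonneg _),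
    Real.sqrt_mul (by positivity)] at h3
  exact h3


/-- Let `U, V, W` be finite-dimensional complex inner product spaces,
`D : U → V` a linear map, and `ρ : V × U* → W` a (continuous) bilinear map, where `U*`
carries the dual norm.  Then `‖Tr_ρ D‖ ≤ √(rank D) * ‖ρ‖ * ‖D‖`, where
`Tr_ρ D = ∑ i, ρ (D uᵢ) uⁱ` for an orthonormal basis `{uᵢ}` of `U` with dual basis
`{uⁱ}` (for an orthonormal basis the dual basis is `uⁱ = ⟪uᵢ, ·⟫`, i.e.
`InnerProductSpace.toDual ℂ U (b i)`), `‖ρ‖` is the operator (sup) norm of the bilinear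
map and `‖D‖ = (∑ i, ‖D uᵢ‖²)^{1/2}` is the Hilbert–Schmidt norm of `D`. -/
theorem trace_norm_le_sqrt_rank_mul_norm_mul_hs_norm
    {U V W : Type*}
    [NormedAddCommGroup U] [InnerProductSpace ℂ U] [FiniteDimensional ℂ U]
    [NormedAddCommGroup V] [InnerProductSpace ℂ V] [FiniteDimensional ℂ V]
    [NormedAddCommGroup W] [InnerProductSpace ℂ W] [FiniteDimensional ℂ W]
    (D : U →ₗ[ℂ] V)
    (ρ : V →L[ℂ] StrongDual ℂ U →L[ℂ] W)
    {ι : Type*} [Fintype ι] (b : OrthonormalBasis ι ℂ U) :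
    ‖∑ i, ρ (D (b i)) (InnerProductSpace.toDual ℂ U (b i))‖ ≤
      Real.sqrt (Module.finrank ℂ (LinearMap.range D)) *
        @Norm.norm _ (ContinuousLinearMap.hasOpNorm (E := V)
          (F := StrongDual ℂ U →L[ℂ] W) (σ₁₂ := RingHom.id ℂ)) ρ *
        Real.sqrt (∑ i, ‖D (b i)‖ ^ 2) := by
  classical
  letI : NormedAddCommGroup (StrongDual ℂ U →L[ℂ] W) := ContinuousLinearMap.toNormedAddCommGroup
  letI : NormedSpace ℂ (StrongDual ℂ U →L[ℂ] W) := ContinuousLinearMap.toNormedSpace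
  set n := Module.finrank ℂ (LinearMap.range D) with hn
  let f := stdOrthonormalBasis ℂ (LinearMap.range D)
  let g : Fin n → V := fun j => (f j : V)
  let c : Fin n → ι → ℂ := fun j i => ⟪g j, D (b i)⟫_ℂ
  let β : ι → StrongDual ℂ U := fun i => InnerProductSpace.toDual ℂ U (b i)
  have hg_norm : ∀ j, ‖g j‖ = 1 := fun j => by
    exact f.orthonormal.1 j
  have hx : ∀ i, D (b i) ∈ LinearMap.range D := fun i => LinearMap.mem_range_self D (b i)
  have hc : ∀ i j, c j i = ⟪f j, (⟨D (b i), hx i⟩ : LinearMap.range D)⟫_ℂ := by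
    intro i j; simp [c, g, Submodule.coe_inner]
  have hexp : ∀ i, D (b i) = ∑ j, c j i • g j := by
    intro i
    have h1 := f.sum_repr' (⟨D (b i), hx i⟩ : LinearMap.range D)
    have h2 := congrArg (Subtype.val) h1
    simp only [Submodule.coe_sum, Submodule.coe_smul] at h2
    rw [← h2]
    refine Finset.sum_congr rfl fun j _ => ?_
    rw [hc]
  -- norm-sq of each D (b i)
  have hns : ∀ i, ‖D (b i)‖ ^ 2 = ∑ j, ‖c j i‖ ^ 2 := by
    intro i
    have h1 : ‖D (b i)‖ = ‖(⟨D (b i), hx i⟩ : LinearMap.range D)‖ := rfl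
    rw [h1, ← f.repr.norm_map, EuclideanSpace.norm_eq,
      Real.sq_sqrt (by positivity)]
    refine Finset.sum_congr rfl fun j _ => ?_
    rw [f.repr_apply_apply, ← hc]
  have hsum : (∑ i, ρ (D (b i)) (β i)) = ∑ j, ρ (g j) (∑ i, c j i • β i) := by
    have h1 : ∀ i, ρ (D (b i)) (β i) = ∑ j, c j i • ρ (g j) (β i) := by
      intro i
      rw [hexp i]
      simp [ContinuousLinearMap.sum_apply]
    simp_rw [h1]
    rw [Finset.sum_comm]
    refine Finset.sum_congr rfl fun j _ => ?_
    simp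
  have hα : ∀ j, ‖∑ i, c j i • β i‖ = Real.sqrt (∑ i, ‖c j i‖ ^ 2) := by
    intro j
    have h1 : (∑ i, c j i • β i)
        = InnerProductSpace.toDual ℂ U (∑ i, (starRingEnd ℂ) (c j i) • b i) := by
      rw [map_sum]
      refine Finset.sum_congr rfl fun i _ => ?_
      rw [LinearIsometryEquiv.map_smulₛₗ]
      simp [β]
    rw [h1, LinearIsometryEquiv.norm_map]
    have h2 : ∀ i, ‖c j i‖ ^ 2
        = ‖⟪b i, ∑ i', (starRingEnd ℂ) (c j i') • b i'⟫_ℂ‖ ^ 2 := by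
      intro i
      rw [b.orthonormal.inner_right_fintype]
      simp
    simp_rw [h2]
    rw [← b.repr.norm_map, EuclideanSpace.norm_eq]
    congr 1
    refine Finset.sum_congr rfl fun i _ => ?_
    rw [b.repr_apply_apply]
  have key : ∀ j, ‖ρ (g j) (∑ i, c j i • β i)‖ ≤ ‖ρ‖ * Real.sqrt (∑ i, ‖c j i‖ ^ 2) := by
    intro j
    calc ‖ρ (g j) (∑ i, c j i • β i)‖ ≤ ‖ρ‖ * ‖g j‖ * ‖∑ i, c j i • β i‖ :=
          ρ.le_opNorm₂ _ _
      _ = ‖ρ‖ * Real.sqrt (∑ i, ‖c j i‖ ^ 2) := by rw [hg_norm, mul_one, hα]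
  have hswap : (∑ j, ∑ i, ‖c j i‖ ^ 2) = ∑ i, ‖D (b i)‖ ^ 2 := by
    rw [Finset.sum_comm]
    exact Finset.sum_congr rfl fun i _ => (hns i).symm
  have cauchy : (∑ j, Real.sqrt (∑ i, ‖c j i‖ ^ 2))
      ≤ Real.sqrt n * Real.sqrt (∑ j, ∑ i, ‖c j i‖ ^ 2) :=
    sum_sqrt_le_sqrt_card_mul_sqrt_sum _ fun j => by positivity
  calc ‖∑ i, ρ (D (b i)) (InnerProductSpace.toDual ℂ U (b i))‖
      = ‖∑ j, ρ (g j) (∑ i, c j i • β i)‖ := by rw [← hsum]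
    _ ≤ ∑ j, ‖ρ (g j) (∑ i, c j i • β i)‖ := norm_sum_le _ _
    _ ≤ ∑ j, ‖ρ‖ * Real.sqrt (∑ i, ‖c j i‖ ^ 2) := Finset.sum_le_sum fun j _ => key j
    _ = ‖ρ‖ * ∑ j, Real.sqrt (∑ i, ‖c j i‖ ^ 2) := by rw [Finset.mul_sum]
    _ ≤ ‖ρ‖ * (Real.sqrt n * Real.sqrt (∑ j, ∑ i, ‖c j i‖ ^ 2)) := by
        exact mul_le_mul_of_nonneg_left cauchy (norm_nonneg ρ)
    _ = Real.sqrt n * ‖ρ‖ * Real.sqrt (∑ i, ‖D (b i)‖ ^ 2) := by rw [hswap]; ring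
end

section
/- Let H, H₀, H₁, H₂ be complex Hilbert spaces, let T : H₀ → H be a bounded linear operator, and let T₁ : H₀ ⇀ H₁ and T₂ : H₁ ⇀ H₂ be closed, densely defined linear operators such that T₁ maps its domain into the domain of T₂ and T₂(T₁ u) = 0 for every u ∈ Dom T₁. Let F ⊆ H be a closed subspace with T(Ker T₁) ⊆ F, let f ∈ F and C > 0. Then the following are equivalent: (1) there exists u ∈ Ker T₁ with T u = f and ‖u‖_{H₀} ≤ C; (2) for every g ∈ F and every v ∈ Dom(T₁*) ∩ Dom(T₂), one has |⟨g, f⟩_H|² ≤ C² (‖T* g + T₁* v‖²_{H₀} + ‖T₂ v‖²_{H₂}). -/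
open scoped ComplexConjugate

local notation "⟪" x ", " y "⟫" => @inner ℂ _ _ x y

/-- von Neumann: if `x ⟂ Ran T₁†` for a closed densely defined `T₁`, then `x ∈ Ker T₁`. -/
lemma skoda_aux_mem_graph {H₀ H₁ : Type*}
    [NormedAddCommGroup H₀] [InnerProductSpace ℂ H₀] [CompleteSpace H₀]
    [NormedAddCommGroup H₁] [InnerProductSpace ℂ H₁] [CompleteSpace H₁]
    (T₁ : H₀ →ₗ.[ℂ] H₁) (hT₁dense : Dense (T₁.domain : Set H₀))
    (hT₁closed : T₁.IsClosed) (x : H₀)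
    (hx : ∀ v : T₁.adjoint.domain, ⟪(T₁.adjoint v : H₀), x⟫ = 0) :
    ((x, (0 : H₁)) : H₀ × H₁) ∈ T₁.graph := by
  classical
  set e : (H₀ × H₁) ≃ₗ[ℂ] WithLp 2 (H₀ × H₁) := (WithLp.linearEquiv 2 ℂ (H₀ × H₁)).symm
  set G : Submodule ℂ (WithLp 2 (H₀ × H₁)) := T₁.graph.map (e : (H₀ × H₁) →ₗ[ℂ] _)
  -- the rotated graph of the adjoint
  set φ : (H₁ × H₀) →ₗ[ℂ] (H₀ × H₁) :=
    LinearMap.prod (LinearMap.snd ℂ H₁ H₀) (-(LinearMap.fst ℂ H₁ H₀))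
  set S : Submodule ℂ (WithLp 2 (H₀ × H₁)) :=
    (T₁.adjoint.graph.map φ).map (e : (H₀ × H₁) →ₗ[ℂ] _)
  have hGclosed : IsClosed (G : Set (WithLp 2 (H₀ × H₁))) := by
    have : (G : Set (WithLp 2 (H₀ × H₁))) =
        (WithLp.prodContinuousLinearEquiv 2 ℂ H₀ H₁).symm '' (T₁.graph : Set (H₀ × H₁)) := by
      rfl
    rw [this]
    exact ((WithLp.prodContinuousLinearEquiv 2 ℂ H₀ H₁).symm.toHomeomorph.isClosed_image).2
      hT₁closed
  -- G^⊥ ≤ S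
  have hGS : Gᗮ ≤ S := by
    intro z hz
    rw [Submodule.mem_orthogonal] at hz
    set a : H₀ := (e.symm z).1
    set b : H₁ := (e.symm z).2
    have hzab : z = e (a, b) := by simp [a, b]
    have hmain : ∀ w : T₁.domain, ⟪a, (w : H₀)⟫ = ⟪(-b : H₁), T₁ w⟫ := by
      intro w
      have h0 : ⟪e ((w : H₀), T₁ w), z⟫ = 0 := by
        refine hz _ ?_
        exact Submodule.mem_map_of_mem (T₁.mem_graph w)
      rw [hzab] at h0
      have h1 : ⟪(w : H₀), a⟫ + ⟪T₁ w, b⟫ = 0 := h0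
      have h2 : ⟪T₁ w, b⟫ = -⟪(w : H₀), a⟫ := by linear_combination h1
      calc ⟪a, (w : H₀)⟫ = conj ⟪(w : H₀), a⟫ := (inner_conj_symm _ _).symm
        _ = conj (-⟪T₁ w, b⟫) := by rw [h2]; ring_nf
        _ = ⟪(-b : H₁), T₁ w⟫ := by rw [map_neg, inner_conj_symm, inner_neg_left]
    have hbmem : (-b : H₁) ∈ T₁.adjoint.domain :=
      LinearPMap.mem_adjoint_domain_of_exists _ ⟨a, fun w => hmain w⟩
    have hval : T₁.adjoint ⟨-b, hbmem⟩ = a :=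
      LinearPMap.adjoint_apply_eq hT₁dense _ (fun w => hmain w)
    refine Submodule.mem_map_of_mem ?_
    refine ⟨((-b : H₁), (a : H₀)), ?_, ?_⟩
    · have h := T₁.adjoint.mem_graph ⟨-b, hbmem⟩
      rw [hval] at h
      exact h
    · simp [φ, Prod.ext_iff, hzab]
      constructor <;> rfl
  haveI : CompleteSpace G := hGclosed.completeSpace_coe
  have hSG : Sᗮ ≤ G := by
    have h1 : Sᗮ ≤ Gᗮᗮ := Submodule.orthogonal_le hGS
    rwa [Submodule.orthogonal_orthogonal] at h1
  have hxS : e (x, 0) ∈ Sᗮ := by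
    rw [Submodule.mem_orthogonal]
    rintro u hu
    rcases hu with ⟨p, hp, rfl⟩
    rcases hp with ⟨q, hq, rfl⟩
    rw [SetLike.mem_coe, LinearPMap.mem_graph_iff] at hq
    obtain ⟨v, hv1, hv2⟩ := hq
    show (⟪(φ q).1, x⟫ + ⟪(φ q).2, (0 : H₁)⟫ : ℂ) = 0
    have h1 : (φ q).1 = T₁.adjoint v := hv2.symm
    rw [h1, inner_zero_right, add_zero]
    exact hx v
  have hxG : e (x, 0) ∈ G := hSG hxS
  rcases hxG with ⟨p, hp, hep⟩
  have : p = (x, 0) := e.injective hep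
  rwa [this] at hp

set_option maxHeartbeats 2000000 in
/-- Skoda's functional-analytic lemma.  Let `H, H₀, H₁, H₂` be complex
Hilbert spaces, `T : H₀ → H` a bounded linear operator, and `T₁ : H₀ ⇀ H₁`,
`T₂ : H₁ ⇀ H₂` closed densely defined operators with `T₂ ∘ T₁ = 0` on `Dom T₁`.
Let `F ⊆ H` be a closed subspace with `T (Ker T₁) ⊆ F`, `f ∈ F` and `C > 0`.
Then `f = T u` for some `u ∈ Ker T₁` with `‖u‖ ≤ C` iff
`|⟪g, f⟫|² ≤ C² (‖T* g + T₁* v‖² + ‖T₂ v‖²)` for all `g ∈ F` and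
`v ∈ Dom T₁* ∩ Dom T₂`. -/
theorem skoda_duality_lemma
    {H H₀ H₁ H₂ : Type*}
    [NormedAddCommGroup H] [InnerProductSpace ℂ H] [CompleteSpace H]
    [NormedAddCommGroup H₀] [InnerProductSpace ℂ H₀] [CompleteSpace H₀]
    [NormedAddCommGroup H₁] [InnerProductSpace ℂ H₁] [CompleteSpace H₁]
    [NormedAddCommGroup H₂] [InnerProductSpace ℂ H₂] [CompleteSpace H₂]
    (T : H₀ →L[ℂ] H)
    (T₁ : H₀ →ₗ.[ℂ] H₁) (T₂ : H₁ →ₗ.[ℂ] H₂)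
    (hT₁dense : Dense (T₁.domain : Set H₀)) (hT₁closed : T₁.IsClosed)
    (hT₂dense : Dense (T₂.domain : Set H₁)) (hT₂closed : T₂.IsClosed)
    (hmap : ∀ u : T₁.domain, T₁ u ∈ T₂.domain)
    (hcomp : ∀ u : T₁.domain, T₂ ⟨T₁ u, hmap u⟩ = 0)
    (F : Submodule ℂ H) (hF : IsClosed (F : Set H))
    (hTF : ∀ u : T₁.domain, T₁ u = 0 → T (u : H₀) ∈ F)
    (f : H) (hf : f ∈ F) (C : ℝ) (hC : 0 < C) :
    (∃ u : T₁.domain, T₁ u = 0 ∧ T (u : H₀) = f ∧ ‖(u : H₀)‖ ≤ C) ↔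
      (∀ g ∈ F, ∀ (v : H₁) (hv₁ : v ∈ T₁.adjoint.domain) (hv₂ : v ∈ T₂.domain),
        ‖(inner ℂ g f : ℂ)‖ ^ 2 ≤
          C ^ 2 * (‖ContinuousLinearMap.adjoint T g + T₁.adjoint ⟨v, hv₁⟩‖ ^ 2 +
            ‖T₂ ⟨v, hv₂⟩‖ ^ 2)) := by
  classical
  have hfa : T₁.adjoint.IsFormalAdjoint T₁ := LinearPMap.adjoint_isFormalAdjoint hT₁dense
  constructor
  · -- easy direction
    rintro ⟨u, hu0, huf, hunorm⟩ g hg v hv₁ hv₂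
    have h1 : (⟪g, f⟫ : ℂ) = ⟪ContinuousLinearMap.adjoint T g + T₁.adjoint ⟨v, hv₁⟩, (u : H₀)⟫ := by
      rw [inner_add_left]
      have h2 : (⟪ContinuousLinearMap.adjoint T g, (u : H₀)⟫ : ℂ) = ⟪g, T (u : H₀)⟫ :=
        ContinuousLinearMap.adjoint_inner_left T (u : H₀) g
      have h3 : (⟪T₁.adjoint ⟨v, hv₁⟩, (u : H₀)⟫ : ℂ) = ⟪v, T₁ u⟫ := hfa ⟨v, hv₁⟩ u
      rw [h2, h3, huf, hu0, inner_zero_right, add_zero]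
    have h4 : ‖(⟪g, f⟫ : ℂ)‖ ≤ ‖ContinuousLinearMap.adjoint T g + T₁.adjoint ⟨v, hv₁⟩‖ * C := by
      rw [h1]
      calc ‖(⟪ContinuousLinearMap.adjoint T g + T₁.adjoint ⟨v, hv₁⟩, (u : H₀)⟫ : ℂ)‖
          ≤ ‖ContinuousLinearMap.adjoint T g + T₁.adjoint ⟨v, hv₁⟩‖ * ‖(u : H₀)‖ :=
            norm_inner_le_norm _ _
        _ ≤ _ := by
            apply mul_le_mul_of_nonneg_left hunorm (norm_nonneg _)
    have h5 : ‖(⟪g, f⟫ : ℂ)‖ ^ 2 ≤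
        C ^ 2 * ‖ContinuousLinearMap.adjoint T g + T₁.adjoint ⟨v, hv₁⟩‖ ^ 2 := by
      calc ‖(⟪g, f⟫ : ℂ)‖ ^ 2 ≤
          (‖ContinuousLinearMap.adjoint T g + T₁.adjoint ⟨v, hv₁⟩‖ * C) ^ 2 := by
            apply pow_le_pow_left₀ (norm_nonneg _) h4
        _ = C ^ 2 * ‖ContinuousLinearMap.adjoint T g + T₁.adjoint ⟨v, hv₁⟩‖ ^ 2 := by ring
    refine h5.trans ?_
    have : (0:ℝ) ≤ C ^ 2 * ‖T₂ ⟨v, hv₂⟩‖ ^ 2 := by positivity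
    nlinarith
  · -- hard direction
    intro h2
    -- the kernel of T₁ as a closed submodule
    set K : Submodule ℂ H₀ := T₁.graph.comap (LinearMap.inl ℂ H₀ H₁) with hK
    have hKmem : ∀ x : H₀, x ∈ K ↔ ((x, (0:H₁)) : H₀ × H₁) ∈ T₁.graph := fun x => Iff.rfl
    have hKclosed : IsClosed (K : Set H₀) := by
      have : (K : Set H₀) = (fun x : H₀ => ((x, (0:H₁)) : H₀ × H₁)) ⁻¹' (T₁.graph : Set (H₀ × H₁)) := rfl
      rw [this]
      exact hT₁closed.preimage (continuous_id.prodMk continuous_const)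
    haveI : CompleteSpace K := hKclosed.completeSpace_coe
    -- the kernel of T₂ as a closed submodule
    set N : Submodule ℂ H₁ := T₂.graph.comap (LinearMap.inl ℂ H₁ H₂) with hN
    have hNmem : ∀ x : H₁, x ∈ N ↔ ((x, (0:H₂)) : H₁ × H₂) ∈ T₂.graph := fun x => Iff.rfl
    have hNclosed : IsClosed (N : Set H₁) := by
      have : (N : Set H₁) = (fun x : H₁ => ((x, (0:H₂)) : H₁ × H₂)) ⁻¹' (T₂.graph : Set (H₁ × H₂)) := rfl
      rw [this]
      exact hT₂closed.preimage (continuous_id.prodMk continuous_const)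
    haveI : CompleteSpace N := hNclosed.completeSpace_coe
    -- range of T₁ lands in N
    have hT₁N : ∀ x : T₁.domain, T₁ x ∈ N := by
      intro x
      rw [hNmem, LinearPMap.mem_graph_iff]
      exact ⟨⟨T₁ x, hmap x⟩, rfl, hcomp x⟩
    -- membership in K unpacked
    have hKker : ∀ x : H₀, x ∈ K → ∃ hx : x ∈ T₁.domain, T₁ ⟨x, hx⟩ = 0 := by
      intro x hx
      rw [hKmem, LinearPMap.mem_graph_iff] at hx
      obtain ⟨y, hy1, hy2⟩ := hx
      have hy1' : (y : H₀) = x := hy1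
      refine ⟨hy1' ▸ y.2, ?_⟩
      have : (⟨x, hy1' ▸ y.2⟩ : T₁.domain) = y := Subtype.ext hy1'.symm
      rw [this]; exact hy2
    have hkerK : ∀ x : T₁.domain, T₁ x = 0 → (x : H₀) ∈ K := by
      intro x hx
      rw [hKmem, LinearPMap.mem_graph_iff]
      exact ⟨x, rfl, hx⟩
    -- the range of the adjoint
    set R : Submodule ℂ H₀ := LinearMap.range T₁.adjoint.toFun with hR
    have hKR : K = Rᗮ := by
      apply le_antisymm
      · intro x hx
        obtain ⟨hx1, hx2⟩ := hKker x hx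
        rw [Submodule.mem_orthogonal]
        rintro y ⟨v, rfl⟩
        have : (⟪T₁.adjoint v, (⟨x, hx1⟩ : T₁.domain)⟫ : ℂ) = ⟪(v : H₁), T₁ ⟨x, hx1⟩⟫ := hfa v _
        rw [hx2, inner_zero_right] at this
        exact this
      · intro x hx
        rw [Submodule.mem_orthogonal] at hx
        rw [hKmem]
        apply skoda_aux_mem_graph T₁ hT₁dense hT₁closed
        intro v
        exact hx _ ⟨v, rfl⟩
    have hKorth : Kᗮ = R.topologicalClosure := by
      rw [hKR, Submodule.orthogonal_orthogonal_eq_closure]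
    have hNker : ∀ x : H₁, x ∈ N → ∃ hx : x ∈ T₂.domain, T₂ ⟨x, hx⟩ = 0 := by
      intro x hx
      rw [hNmem, LinearPMap.mem_graph_iff] at hx
      obtain ⟨y, hy1, hy2⟩ := hx
      have hy1' : (y : H₁) = x := hy1
      refine ⟨hy1' ▸ y.2, ?_⟩
      have : (⟨x, hy1' ▸ y.2⟩ : T₂.domain) = y := Subtype.ext hy1'.symm
      rw [this]; exact hy2
    -- correcting a vector in Dom T₁† to lie in Dom T₂ with T₂ = 0
    have hvsplit : ∀ (v : H₁) (hv : v ∈ T₁.adjoint.domain), ∃ (w : H₁)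
        (hw₁ : w ∈ T₁.adjoint.domain) (hw₂ : w ∈ T₂.domain),
        T₁.adjoint ⟨w, hw₁⟩ = T₁.adjoint ⟨v, hv⟩ ∧ T₂ ⟨w, hw₂⟩ = 0 := by
      intro v hv
      set w : H₁ := (N.orthogonalProjectionOnto v : H₁) with hw
      have hwN : w ∈ N := (N.orthogonalProjectionOnto v).2
      have hv₂orth : v - w ∈ Nᗮ := Submodule.sub_starProjection_mem_orthogonal v
      have hv₂adj : ∀ x : T₁.domain, (⟪(0 : H₀), (x : H₀)⟫ : ℂ) = ⟪v - w, T₁ x⟫ := by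
        intro x
        rw [inner_zero_left]
        symm
        rw [← inner_conj_symm, Submodule.inner_right_of_mem_orthogonal (hT₁N x) hv₂orth,
          map_zero]
      have hv₂mem : v - w ∈ T₁.adjoint.domain :=
        LinearPMap.mem_adjoint_domain_of_exists _ ⟨0, hv₂adj⟩
      have hv₂val : T₁.adjoint ⟨v - w, hv₂mem⟩ = 0 :=
        LinearPMap.adjoint_apply_eq hT₁dense _ hv₂adj
      have hwmem : w ∈ T₁.adjoint.domain := by
        have h : w = v - (v - w) := by abel
        rw [h]
        exact Submodule.sub_mem _ hv hv₂mem
      obtain ⟨hwd, hwval⟩ := hNker w hwN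
      refine ⟨w, hwmem, hwd, ?_, hwval⟩
      have hsplit : (⟨v, hv⟩ : T₁.adjoint.domain) = ⟨w, hwmem⟩ + ⟨v - w, hv₂mem⟩ := by
        apply Subtype.ext
        show v = w + (v - w)
        abel
      rw [hsplit, T₁.adjoint.map_add, hv₂val, add_zero]
    -- the key inequality
    set L : H →L[ℂ] H₀ :=
      (K.subtypeL.comp (K.orthogonalProjectionOnto)).comp (ContinuousLinearMap.adjoint T) with hL
    have hLmem : ∀ g : H, L g ∈ K := fun g => (K.orthogonalProjectionOnto _).2
    have hLproj : ∀ g : H,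
        L g = (K.orthogonalProjectionOnto (ContinuousLinearMap.adjoint T g) : H₀) := fun g => rfl
    have hkey : ∀ g ∈ F, ‖(⟪g, f⟫ : ℂ)‖ ≤ C * ‖L g‖ := by
      intro g hg
      have hstep : ∀ ε : ℝ, 0 < ε → ‖(⟪g, f⟫ : ℂ)‖ ≤ C * ‖L g‖ + C * ε := by
        intro ε hε
        set a : H₀ := ContinuousLinearMap.adjoint T g with ha
        have hq : a - L g ∈ Kᗮ := Submodule.sub_starProjection_mem_orthogonal a
        have hqc : -(a - L g) ∈ R.topologicalClosure := by
          rw [← hKorth]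
          exact Submodule.neg_mem _ hq
        have hmc : (-(a - L g) : H₀) ∈ closure (R : Set H₀) := hqc
        rw [Metric.mem_closure_iff] at hmc
        obtain ⟨r, hrR, hrdist⟩ := hmc ε hε
        obtain ⟨v, hvr⟩ := hrR
        obtain ⟨w, hw₁, hw₂, hwadj, hwT₂⟩ := hvsplit (v : H₁) v.2
        have hvw : T₁.adjoint ⟨w, hw₁⟩ = r := by
          rw [hwadj, ← hvr]; rfl
        have happ := h2 g hg w hw₁ hw₂
        rw [hwT₂, hvw] at happ
        have hbound : ‖a + r‖ ≤ ‖L g‖ + ε := by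
          have h1 : a + r = L g + (r - -(a - L g)) := by abel
          rw [h1]
          refine (norm_add_le _ _).trans ?_
          have h6 : ‖r - -(a - L g)‖ ≤ ε := by
            rw [← dist_eq_norm, dist_comm]
            exact le_of_lt hrdist
          linarith
        have hnn : (0:ℝ) ≤ ‖L g‖ + ε := by positivity
        have h3 : ‖(⟪g, f⟫ : ℂ)‖ ^ 2 ≤ (C * (‖L g‖ + ε)) ^ 2 := by
          calc ‖(⟪g, f⟫ : ℂ)‖ ^ 2 ≤ C ^ 2 * (‖a + r‖ ^ 2 + ‖(0:H₂)‖ ^ 2) := happ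
            _ = C ^ 2 * ‖a + r‖ ^ 2 := by simp
            _ ≤ C ^ 2 * (‖L g‖ + ε) ^ 2 := by
                have h7 := pow_le_pow_left₀ (norm_nonneg (a + r)) hbound 2
                nlinarith
            _ = (C * (‖L g‖ + ε)) ^ 2 := by ring
        have h4 : ‖(⟪g, f⟫ : ℂ)‖ ≤ C * (‖L g‖ + ε) := by
          have hcn : (0:ℝ) ≤ C * (‖L g‖ + ε) := by positivity
          nlinarith [norm_nonneg (⟪g, f⟫ : ℂ)]
        linarith [h4]
      refine le_of_forall_pos_le_add ?_
      intro ε hε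
      have h8 := hstep (ε / C) (by positivity)
      have hCe : C * (ε / C) = ε := by field_simp
      linarith [h8]
    -- the linear functional on the range of L restricted to F
    set A : ↥F →ₗ[ℂ] H₀ := (L.comp F.subtypeL).toLinearMap with hA
    have hAapp : ∀ g : ↥F, A g = L (g : H) := fun g => rfl
    set ℓ : ↥F →ₗ[ℂ] ℂ := ((innerSL ℂ f).comp F.subtypeL).toLinearMap with hℓ
    have hℓapp : ∀ g : ↥F, ℓ g = ⟪f, (g : H)⟫ := fun g => rfl
    have hkey' : ∀ g : ↥F, ‖ℓ g‖ ≤ C * ‖A g‖ := by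
      intro g
      rw [hℓapp, hAapp]
      have h9 : ‖(⟪f, (g : H)⟫ : ℂ)‖ = ‖(⟪(g : H), f⟫ : ℂ)‖ := by
        rw [← inner_conj_symm]
        exact RCLike.norm_conj _
      rw [h9]
      exact hkey (g : H) g.2
    have hker : LinearMap.ker A ≤ LinearMap.ker ℓ := by
      intro g hg
      rw [LinearMap.mem_ker] at hg ⊢
      have h10 := hkey' g
      rw [hg, norm_zero, mul_zero] at h10
      exact norm_le_zero_iff.mp h10
    set φ₀ : LinearMap.range A →ₗ[ℂ] ℂ :=
      ((LinearMap.ker A).liftQ ℓ hker).comp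
        (LinearMap.quotKerEquivRange A).symm.toLinearMap with hφ₀
    have hφ₀app : ∀ g : ↥F, φ₀ ⟨A g, LinearMap.mem_range_self A g⟩ = ℓ g := by
      intro g
      show ((LinearMap.ker A).liftQ ℓ hker)
        ((LinearMap.quotKerEquivRange A).symm ⟨A g, LinearMap.mem_range_self A g⟩) = ℓ g
      rw [LinearMap.quotKerEquivRange_symm_apply_image]
      rfl
    have hφ₀bound : ∀ x : LinearMap.range A, ‖φ₀ x‖ ≤ C * ‖x‖ := by
      rintro ⟨x, hx⟩
      obtain ⟨g, rfl⟩ := hx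
      rw [hφ₀app g]
      calc ‖ℓ g‖ ≤ C * ‖A g‖ := hkey' g
        _ = C * ‖(⟨A g, LinearMap.mem_range_self A g⟩ : LinearMap.range A)‖ := rfl
    set φ : LinearMap.range A →L[ℂ] ℂ := φ₀.mkContinuous C hφ₀bound with hφ
    have hφnorm : ‖φ‖ ≤ C := φ₀.mkContinuous_norm_le hC.le hφ₀bound
    obtain ⟨ψ, hψeq, hψnorm⟩ := exists_extension_norm_eq (LinearMap.range A) φ
    set u₀ : H₀ := (InnerProductSpace.toDual ℂ H₀).symm ψ with hu₀
    have hu₀app : ∀ x : H₀, (⟪u₀, x⟫ : ℂ) = ψ x := fun x =>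
      InnerProductSpace.toDual_symm_apply
    have hu₀norm : ‖u₀‖ ≤ C := by
      have h11 : ‖u₀‖ = ‖ψ‖ := (InnerProductSpace.toDual ℂ H₀).symm.norm_map ψ
      rw [h11, hψnorm]
      exact hφnorm
    set u : H₀ := (K.orthogonalProjectionOnto u₀ : H₀) with hu
    have huK : u ∈ K := (K.orthogonalProjectionOnto u₀).2
    have hunorm : ‖u‖ ≤ C := by
      have h1 : ‖K.orthogonalProjectionOnto u₀‖ ≤ ‖K.orthogonalProjectionOnto‖ * ‖u₀‖ :=
        (K.orthogonalProjectionOnto).le_opNorm u₀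
      have h2' : ‖K.orthogonalProjectionOnto‖ ≤ 1 := Submodule.orthogonalProjectionOnto_norm_le K
      have h3 : ‖u‖ = ‖K.orthogonalProjectionOnto u₀‖ := rfl
      rw [h3]
      nlinarith [norm_nonneg u₀, norm_nonneg (K.orthogonalProjectionOnto u₀)]
    obtain ⟨hud, huval⟩ := hKker u huK
    -- the main identity ⟪u, T* g⟫ = ⟪f, g⟫ for g ∈ F
    have hmain : ∀ g : ↥F, (⟪u, ContinuousLinearMap.adjoint T (g : H)⟫ : ℂ) = ⟪f, (g : H)⟫ := by
      intro g
      set a : H₀ := ContinuousLinearMap.adjoint T (g : H) with ha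
      have e1 : (⟪u, a⟫ : ℂ) = ⟪u, L (g : H)⟫ + ⟪u, a - L (g : H)⟫ := by
        rw [← inner_add_right]
        congr 1
        abel
      have e2 : (⟪u, a - L (g : H)⟫ : ℂ) = 0 :=
        Submodule.inner_right_of_mem_orthogonal huK
          (Submodule.sub_starProjection_mem_orthogonal a)
      have e3 : (⟪u, L (g : H)⟫ : ℂ) = ⟪u₀, L (g : H)⟫ := by
        have h4 : u - u₀ = -(u₀ - u) := by abel
        have h5 : (⟪u - u₀, L (g : H)⟫ : ℂ) = 0 := by
          rw [← inner_conj_symm]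
          rw [Submodule.inner_right_of_mem_orthogonal (hLmem (g : H)) ?_, map_zero]
          rw [h4]
          exact Submodule.neg_mem _ (Submodule.sub_starProjection_mem_orthogonal u₀)
        have h12 : (⟪u, L (g : H)⟫ : ℂ) - ⟪u₀, L (g : H)⟫ = 0 := by
          rw [← inner_sub_left]; exact h5
        linear_combination h12
      have e4 : (⟪u₀, L (g : H)⟫ : ℂ) = ψ (L (g : H)) := hu₀app _
      have e5 : ψ (L (g : H)) = φ ⟨A g, LinearMap.mem_range_self A g⟩ := by
        have h13 : L (g : H) = ((⟨A g, LinearMap.mem_range_self A g⟩ : LinearMap.range A) : H₀) :=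
          rfl
        rw [h13]
        exact hψeq _
      have e6 : φ ⟨A g, LinearMap.mem_range_self A g⟩ = ℓ g := hφ₀app g
      rw [e1, e2, add_zero, e3, e4, e5, e6, hℓapp]
    refine ⟨⟨u, hud⟩, huval, ?_, hunorm⟩
    have hTuF : T u ∈ F := hTF ⟨u, hud⟩ huval
    have hfin : ∀ g ∈ F, (⟪T u - f, g⟫ : ℂ) = 0 := by
      intro g hg
      have h1 : (⟪T u, g⟫ : ℂ) = ⟪u, ContinuousLinearMap.adjoint T g⟫ := by
        rw [← inner_conj_symm, ← ContinuousLinearMap.adjoint_inner_left, inner_conj_symm]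
      rw [inner_sub_left, h1, hmain ⟨g, hg⟩]
      simp
    have hTuf : T u - f ∈ F := Submodule.sub_mem _ hTuF hf
    have hz := hfin _ hTuf
    rw [inner_self_eq_zero] at hz
    exact sub_eq_zero.mp hz
end
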